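/- For γ > 0, the Tversky dissimilarity d^T_{γ,γ}(X,Y) = 1 - |X∩Y|/(|X∩Y| + γ|X\Y| + γ|Y\X|) (with value 0 if X=Y=∅) is a metric on the powerset of a finite set if and only if γ ≥ 1. -/

import Mathlib

open Finset

private lemma denom_pos' {ι : Type*} [DecidableEq ι] (γ : ℝ) (hγ : 0 < γ)
    (X Y : Finset ι) (h : ¬(X = ∅ ∧ Y = ∅)) :
    0 < ((X ∩ Y).card : ℝ) + γ * ((X \ Y).card : ℝ) + γ * ((Y \ X).card : ℝ) := by
  have hn : (0:ℝ) ≤ ((X ∩ Y).card : ℝ) := by positivity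
  have hb : (0:ℝ) ≤ γ * ((X \ Y).card : ℝ) := by positivity
  have hc : (0:ℝ) ≤ γ * ((Y \ X).card : ℝ) := by positivity
  by_cases hX : X = ∅
  · have hY : Y ≠ ∅ := fun hY => h ⟨hX, hY⟩
    have h1 : 1 ≤ (Y \ X).card := by
      rw [hX, Finset.sdiff_empty]
      exact Nat.one_le_iff_ne_zero.mpr (fun h0 => hY (Finset.card_eq_zero.mp h0))
    have h1' : (1:ℝ) ≤ ((Y \ X).card : ℝ) := by exact_mod_cast h1
    nlinarith
  · have hcard : 1 ≤ X.card := Nat.one_le_iff_ne_zero.mpr (fun h0 => hX (Finset.card_eq_zero.mp h0))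
    have hsplit : (X ∩ Y).card + (X \ Y).card = X.card := Finset.card_inter_add_card_sdiff X Y
    rcases Nat.eq_zero_or_pos (X ∩ Y).card with h0 | hpos
    · have h1 : 1 ≤ (X \ Y).card := by omega
      have h1' : (1:ℝ) ≤ ((X \ Y).card : ℝ) := by exact_mod_cast h1
      nlinarith
    · have h1' : (1:ℝ) ≤ ((X ∩ Y).card : ℝ) := by exact_mod_cast hpos
      nlinarith

private lemma arith' (γ n1 n2 n3 s1 s2 s3 : ℝ) (hγ : 1 ≤ γ)
    (hn1 : 0 ≤ n1) (hs1 : 0 ≤ s1) (hs2 : 0 ≤ s2) (hs3 : 0 ≤ s3)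
    (h1 : s1 ≤ s2 + s3) (h2 : n2 ≤ n1 + s3) (h3 : n3 ≤ n1 + s2)
    (hD2 : 0 < n2 + γ*s2) (hD3 : 0 < n3 + γ*s3) (hD1 : 0 < n1 + γ*s1) :
    γ*s1/(n1+γ*s1) ≤ γ*s2/(n2+γ*s2) + γ*s3/(n3+γ*s3) := by
  have hγ0 : (0:ℝ) < γ := by linarith
  have hD : 0 < n1 + γ*(s2+s3) := by nlinarith
  have step1 : γ*s1/(n1+γ*s1) ≤ γ*(s2+s3)/(n1+γ*(s2+s3)) := by
    rw [div_le_div_iff₀ hD1 hD]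
    nlinarith [mul_nonneg (mul_nonneg hγ0.le hn1) (sub_nonneg.mpr h1)]
  have hD2' : n2 + γ*s2 ≤ n1 + γ*(s2+s3) := by nlinarith
  have hD3' : n3 + γ*s3 ≤ n1 + γ*(s2+s3) := by nlinarith
  have step2 : γ*s2/(n1+γ*(s2+s3)) ≤ γ*s2/(n2+γ*s2) :=
    div_le_div_of_nonneg_left (by positivity) hD2 hD2'
  have step3 : γ*s3/(n1+γ*(s2+s3)) ≤ γ*s3/(n3+γ*s3) :=
    div_le_div_of_nonneg_left (by positivity) hD3 hD3'
  have split : γ*(s2+s3)/(n1+γ*(s2+s3)) = γ*s2/(n1+γ*(s2+s3)) + γ*s3/(n1+γ*(s2+s3)) := by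
    field_simp
  linarith [step1, step2, step3, split.le, split.ge]

private lemma rewr (γ n b c : ℝ) (h : 0 < n + γ*b + γ*c) :
    1 - n/(n+γ*b+γ*c) = γ*(b+c)/(n+γ*(b+c)) := by
  have h' : n + γ*(b+c) ≠ 0 := by intro hh; rw [show n+γ*b+γ*c = n+γ*(b+c) by ring, hh] at h; linarith
  rw [show n+γ*b+γ*c = n+γ*(b+c) by ring]
  field_simp
  ring

theorem stmt_18 {ι : Type*} [Fintype ι] [DecidableEq ι] (hcard : 3 ≤ Fintype.card ι)
    (γ : ℝ) (hγ : 0 < γ)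
    (dT : Finset ι → Finset ι → ℝ)
    (hdT : ∀ X Y : Finset ι, dT X Y =
      if X = ∅ ∧ Y = ∅ then 0
      else 1 - ((X ∩ Y).card : ℝ) /
        (((X ∩ Y).card : ℝ) + γ * ((X \ Y).card : ℝ) + γ * ((Y \ X).card : ℝ))) :
    ((∀ X Y, 0 ≤ dT X Y) ∧
     (∀ X Y, dT X Y = 0 ↔ X = Y) ∧
     (∀ X Y, dT X Y = dT Y X) ∧
     (∀ X Y Z, dT X Y ≤ dT X Z + dT Z Y)) ↔ 1 ≤ γ := by
  constructor
  · rintro ⟨-, -, -, htri⟩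
    obtain ⟨x, y, hxy⟩ := Fintype.exists_pair_of_one_lt_card (α := ι) (by omega)
    have h1γ : (0:ℝ) < 1 + γ := by linarith
    have key := htri {x} {y} {x, y}
    rw [hdT, hdT, hdT] at key
    have c1 : ({x} : Finset ι) ∩ {y} = ∅ := by
      ext a; simp only [Finset.mem_inter, Finset.mem_singleton, Finset.notMem_empty, iff_false]
      rintro ⟨rfl, rfl⟩; exact hxy rfl
    have c2 : ({x} : Finset ι) \ {y} = {x} := by
      ext a; simp only [Finset.mem_sdiff, Finset.mem_singleton]
      constructor
      · rintro ⟨h, -⟩; exact h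
      · rintro rfl; exact ⟨rfl, hxy⟩
    have c3 : ({y} : Finset ι) \ {x} = {y} := by
      ext a; simp only [Finset.mem_sdiff, Finset.mem_singleton]
      constructor
      · rintro ⟨h, -⟩; exact h
      · rintro rfl; exact ⟨rfl, fun h => hxy h.symm⟩
    have c4 : ({x} : Finset ι) ∩ {x, y} = {x} := by
      ext a; simp only [Finset.mem_inter, Finset.mem_singleton, Finset.mem_insert]
      constructor
      · rintro ⟨h, -⟩; exact h
      · rintro rfl; exact ⟨rfl, Or.inl rfl⟩
    have c5 : ({x} : Finset ι) \ {x, y} = ∅ := by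
      ext a; simp only [Finset.mem_sdiff, Finset.mem_singleton, Finset.mem_insert,
        Finset.notMem_empty, iff_false]
      rintro ⟨rfl, h⟩; exact h (Or.inl rfl)
    have c6 : ({x, y} : Finset ι) \ {x} = {y} := by
      ext a; simp only [Finset.mem_sdiff, Finset.mem_singleton, Finset.mem_insert]
      constructor
      · rintro ⟨h | h, h2⟩
        · exact absurd h h2
        · exact h
      · rintro rfl; exact ⟨Or.inr rfl, fun h => hxy h.symm⟩
    have c7 : ({x, y} : Finset ι) ∩ {y} = {y} := by
      ext a; simp only [Finset.mem_inter, Finset.mem_singleton, Finset.mem_insert]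
      constructor
      · rintro ⟨-, h⟩; exact h
      · rintro rfl; exact ⟨Or.inr rfl, rfl⟩
    have c8 : ({x, y} : Finset ι) \ {y} = {x} := by
      ext a; simp only [Finset.mem_sdiff, Finset.mem_singleton, Finset.mem_insert]
      constructor
      · rintro ⟨h | h, h2⟩
        · exact h
        · exact absurd h h2
      · rintro rfl; exact ⟨Or.inl rfl, hxy⟩
    have c9 : ({y} : Finset ι) \ {x, y} = ∅ := by
      ext a; simp only [Finset.mem_sdiff, Finset.mem_singleton, Finset.mem_insert,
        Finset.notMem_empty, iff_false]
      rintro ⟨rfl, h⟩; exact h (Or.inr rfl)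
    rw [c1, c2, c3, c4, c5, c6, c7, c8, c9] at key
    rw [if_neg (by simp), if_neg (by simp), if_neg (by simp)] at key
    simp only [Finset.card_empty, Finset.card_singleton, Nat.cast_zero, Nat.cast_one] at key
    rw [zero_div, show (1:ℝ)+γ*0+γ*1 = 1+γ by ring, show (1:ℝ)+γ*1+γ*0 = 1+γ by ring] at key
    have h2 : 2 * (1/(1+γ)) ≤ 1 := by linarith
    rw [mul_one_div, div_le_one h1γ] at h2
    linarith
  · intro hγ1
    have hnn : ∀ X Y : Finset ι, 0 ≤ dT X Y := by
      intro X Y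
      rw [hdT]
      split_ifs with h
      · exact le_refl 0
      · have hD := denom_pos' γ hγ X Y h
        have : ((X ∩ Y).card : ℝ) / (((X ∩ Y).card : ℝ) + γ * ((X \ Y).card : ℝ) + γ * ((Y \ X).card : ℝ)) ≤ 1 := by
          rw [div_le_one hD]
          have : (0:ℝ) ≤ γ * ((X \ Y).card : ℝ) := by positivity
          have : (0:ℝ) ≤ γ * ((Y \ X).card : ℝ) := by positivity
          linarith
        linarith
    refine ⟨hnn, ?_, ?_, ?_⟩
    · intro X Y
      rw [hdT]
      split_ifs with h
      · simp [h.1, h.2]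
      · have hD := denom_pos' γ hγ X Y h
        constructor
        · intro h0
          have h1 : ((X ∩ Y).card : ℝ) / (((X ∩ Y).card : ℝ) + γ * ((X \ Y).card : ℝ) + γ * ((Y \ X).card : ℝ)) = 1 := by linarith
          rw [div_eq_one_iff_eq hD.ne'] at h1
          have hb0 : (0:ℝ) ≤ γ * ((X \ Y).card : ℝ) := mul_nonneg hγ.le (Nat.cast_nonneg _)
          have hc0 : (0:ℝ) ≤ γ * ((Y \ X).card : ℝ) := mul_nonneg hγ.le (Nat.cast_nonneg _)
          have hgb : γ * ((X \ Y).card : ℝ) = 0 := by linarith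
          have hgc : γ * ((Y \ X).card : ℝ) = 0 := by linarith
          have hb : ((X \ Y).card : ℝ) = 0 ∧ ((Y \ X).card : ℝ) = 0 :=
            ⟨(mul_eq_zero.mp hgb).resolve_left hγ.ne',
             (mul_eq_zero.mp hgc).resolve_left hγ.ne'⟩
          have hb1 : (X \ Y) = ∅ := Finset.card_eq_zero.mp (by exact_mod_cast hb.1)
          have hb2 : (Y \ X) = ∅ := Finset.card_eq_zero.mp (by exact_mod_cast hb.2)
          exact Finset.Subset.antisymm (Finset.sdiff_eq_empty_iff_subset.mp hb1)
            (Finset.sdiff_eq_empty_iff_subset.mp hb2)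
        · rintro rfl
          have hX : X ≠ ∅ := fun hX => h ⟨hX, hX⟩
          have : X ∩ X = X := Finset.inter_self X
          rw [this, Finset.sdiff_self]
          have h1 : (0:ℝ) < (X.card : ℝ) := by
            have : 1 ≤ X.card := Nat.one_le_iff_ne_zero.mpr (fun h0 => hX (Finset.card_eq_zero.mp h0))
            exact_mod_cast Nat.lt_of_lt_of_le Nat.zero_lt_one this
          simp only [Finset.card_empty, Nat.cast_zero, mul_zero, add_zero]
          field_simp
          norm_num
    · intro X Y
      rw [hdT, hdT]
      by_cases h : X = ∅ ∧ Y = ∅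
      · rw [if_pos h, if_pos ⟨h.2, h.1⟩]
      · rw [if_neg h, if_neg (fun hh => h ⟨hh.2, hh.1⟩), Finset.inter_comm Y X]
        ring_nf
    · intro X Y Z
      by_cases hXY : X = ∅ ∧ Y = ∅
      · rw [hdT X Y, if_pos hXY]
        have := hnn X Z
        have := hnn Z Y
        linarith
      · by_cases hXZ : X = ∅ ∧ Z = ∅
        · obtain ⟨hX, hZ⟩ := hXZ
          subst hX; subst hZ
          rw [hdT ∅ ∅, if_pos ⟨rfl, rfl⟩]
          linarith [le_refl (dT ∅ Y)]
        · by_cases hZY : Z = ∅ ∧ Y = ∅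
          · obtain ⟨hZ, hY⟩ := hZY
            subst hZ; subst hY
            rw [hdT ∅ ∅, if_pos ⟨rfl, rfl⟩]
            linarith [le_refl (dT X ∅)]
          · rw [hdT X Y, hdT X Z, hdT Z Y, if_neg hXY, if_neg hXZ, if_neg hZY]
            have hD1 := denom_pos' γ hγ X Y hXY
            have hD2 := denom_pos' γ hγ X Z hXZ
            have hD3 := denom_pos' γ hγ Z Y hZY
            rw [rewr γ _ _ _ hD1, rewr γ _ _ _ hD2, rewr γ _ _ _ hD3]
            -- set inequalities
            have sub1 : X \ Y ⊆ (X \ Z) ∪ (Z \ Y) := by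
              intro a ha
              simp only [Finset.mem_sdiff, Finset.mem_union] at *
              by_cases haz : a ∈ Z
              · exact Or.inr ⟨haz, ha.2⟩
              · exact Or.inl ⟨ha.1, haz⟩
            have sub2 : Y \ X ⊆ (Y \ Z) ∪ (Z \ X) := by
              intro a ha
              simp only [Finset.mem_sdiff, Finset.mem_union] at *
              by_cases haz : a ∈ Z
              · exact Or.inr ⟨haz, ha.2⟩
              · exact Or.inl ⟨ha.1, haz⟩
            have sub3 : X ∩ Z ⊆ (X ∩ Y) ∪ (Z \ Y) := by
              intro a ha
              simp only [Finset.mem_inter, Finset.mem_sdiff, Finset.mem_union] at *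
              by_cases hay : a ∈ Y
              · exact Or.inl ⟨ha.1, hay⟩
              · exact Or.inr ⟨ha.2, hay⟩
            have sub4 : Z ∩ Y ⊆ (X ∩ Y) ∪ (Z \ X) := by
              intro a ha
              simp only [Finset.mem_inter, Finset.mem_sdiff, Finset.mem_union] at *
              by_cases hax : a ∈ X
              · exact Or.inl ⟨hax, ha.2⟩
              · exact Or.inr ⟨ha.1, hax⟩
            have e1 : (X \ Y).card ≤ (X \ Z).card + (Z \ Y).card :=
              le_trans (Finset.card_le_card sub1) (Finset.card_union_le _ _)
            have e2 : (Y \ X).card ≤ (Y \ Z).card + (Z \ X).card :=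
              le_trans (Finset.card_le_card sub2) (Finset.card_union_le _ _)
            have e3 : (X ∩ Z).card ≤ (X ∩ Y).card + (Z \ Y).card :=
              le_trans (Finset.card_le_card sub3) (Finset.card_union_le _ _)
            have e4 : (Z ∩ Y).card ≤ (X ∩ Y).card + (Z \ X).card :=
              le_trans (Finset.card_le_card sub4) (Finset.card_union_le _ _)
            apply arith' γ _ _ _ _ _ _ hγ1 (by positivity) (by positivity) (by positivity)
              (by positivity)
            · have e1' : ((X \ Y).card:ℝ) ≤ ((X \ Z).card:ℝ) + ((Z \ Y).card:ℝ) := by exact_mod_cast e1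
              have e2' : ((Y \ X).card:ℝ) ≤ ((Y \ Z).card:ℝ) + ((Z \ X).card:ℝ) := by exact_mod_cast e2
              linarith
            · have e3' : ((X ∩ Z).card:ℝ) ≤ ((X ∩ Y).card:ℝ) + ((Z \ Y).card:ℝ) := by exact_mod_cast e3
              linarith [(show (0:ℝ) ≤ ((Y \ Z).card:ℝ) by positivity)]
            · have e4' : ((Z ∩ Y).card:ℝ) ≤ ((X ∩ Y).card:ℝ) + ((Z \ X).card:ℝ) := by exact_mod_cast e4
              linarith [(show (0:ℝ) ≤ ((X \ Z).card:ℝ) by positivity)]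
            · rw [show ((X ∩ Z).card:ℝ) + γ*(((X \ Z).card:ℝ) + ((Z \ X).card:ℝ)) = ((X ∩ Z).card:ℝ) + γ*((X \ Z).card:ℝ) + γ*((Z \ X).card:ℝ) by ring]
              exact hD2
            · rw [show ((Z ∩ Y).card:ℝ) + γ*(((Z \ Y).card:ℝ) + ((Y \ Z).card:ℝ)) = ((Z ∩ Y).card:ℝ) + γ*((Z \ Y).card:ℝ) + γ*((Y \ Z).card:ℝ) by ring]
              exact hD3
            · rw [show ((X ∩ Y).card:ℝ) + γ*(((X \ Y).card:ℝ) + ((Y \ X).card:ℝ)) = ((X ∩ Y).card:ℝ) + γ*((X \ Y).card:ℝ) + γ*((Y \ X).card:ℝ) by ring]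
              exact hD1
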